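/- A locally optimal solution 2-approximately serves all clients outside expensive clusters: let ε ∈ (0, 1/12], n := |D| ≥ 3, and 1 ≤ k ≤ |F|. Let OPT, S ⊆ F with |OPT| = |S| = k, with assignments σ_OPT for OPT and σ_S for S; write opt := cost(OPT) > 0, suppose cost(S) ≤ 5·opt and that S is locally optimal under single swaps (cost((S−{c})∪{c'}) ≥ cost(S) for all c ∈ S, c' ∈ F). Call C*_o := σ_OPT⁻¹(o) pure if there is c ∈ S with |σ_S⁻¹(c) Δ C*_o| ≤ 3ε·min(|C*_o|, |σ_S⁻¹(c)|); for each pure o fix such a center t(o) ∈ S, and for each non-pure o let t(o) ∈ S satisfy d(o,t(o)) = d(o,S). Assume the number of non-pure clusters is at most (ln n)/ε³. For each non-pure o with C*_o ≠ ∅ fix an ε-quantile radius a_o with leaders L_o and average γ_o; call a non-pure o basic-cheap if Σ_{p∈L_o} d(p,S) ≤ ε⁵·opt/ln n or d(o,S) ≤ (1+ε)·a_o + ε·γ_o; let V be a set of non-pure, non-basic-cheap centers with Σ_{o∈V} Σ_{p∈C*_o} d(p,S) ≤ ε²·opt; call o expensive if o is non-pure, non-basic-cheap and o ∉ V. Then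 Σ_{p : σ_OPT(p) not expensive} d(p, t(σ_OPT(p))) ≤ 2·Σ_{p : σ_OPT(p) not expensive} d(p, OPT) + 68·ε·opt. -/

import Mathlib

open Finset

/-- `d(p,S)`: distance from `p` to the closest point of `S` (junk `0` if `S = ∅`). -/
noncomputable def dS {X : Type*} [MetricSpace X] (p : X) (S : Finset X) : ℝ :=
  if h : S.Nonempty then S.inf' h (fun c => dist p c) else 0

/-- `cost(S) = Σ_{p∈D} d(p,S)`. -/
noncomputable def kmCost {X : Type*} [MetricSpace X] (D S : Finset X) : ℝ :=
  ∑ p ∈ D, dS p S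

/-- The cluster of center `o` under assignment `σ`. -/
def cluster {X : Type*} [DecidableEq X] (D : Finset X) (σ : X → X) (o : X) : Finset X :=
  D.filter (fun p => σ p = o)

/-- The cluster of `o ∈ OPT` is pure (w.r.t. `S`) if some cluster of `S` agrees with it
up to `3ε·min` of the cluster sizes. -/
def IsPure {X : Type*} [DecidableEq X] (D S : Finset X) (σS σO : X → X) (ε : ℝ)
    (o : X) : Prop :=
  ∃ c ∈ S, ((symmDiff (cluster D σS c) (cluster D σO o)).card : ℝ)
    ≤ 3 * ε * min ((cluster D σO o).card : ℝ) ((cluster D σS c).card : ℝ)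

/-- A (non-pure) cluster with center `o` is basic-cheap if its leaders are cheap in `S`
or its center is covered by `S`. -/
noncomputable def BasicCheap {X : Type*} [MetricSpace X] [DecidableEq X]
    (D S : Finset X) (σO : X → X) (a : X → ℝ) (opt ε : ℝ) (o : X) : Prop :=
  (∑ p ∈ (cluster D σO o).filter (fun p => dist p o ≤ a o), dS p S
      ≤ ε ^ 5 * opt / Real.log D.card) ∨
  dS o S ≤ (1 + ε) * a o
    + ε * ((1 / ((cluster D σO o).card : ℝ))
        * ∑ p ∈ cluster D σO o, (dist p o + dS p S))

lemma dS_nonneg' {X : Type*} [MetricSpace X] (p : X) (S : Finset X) : 0 ≤ dS p S := by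
  unfold dS; split
  · exact Finset.le_inf' _ _ (fun c _ => dist_nonneg)
  · exact le_refl _

lemma dS_le' {X : Type*} [MetricSpace X] {p c : X} {S : Finset X} (h : c ∈ S) :
    dS p S ≤ dist p c := by
  unfold dS; rw [dif_pos ⟨c, h⟩]; exact Finset.inf'_le _ h

set_option maxHeartbeats 2000000 in
open scoped Classical in
/-- A locally optimal solution 2-approximately serves all clients outside expensive
clusters: with `t(o)` a pureness witness for pure `o` and the closest center of `S` for
non-pure `o`, and `o` expensive iff it is non-pure, non-basic-cheap and not in `V`,
`Σ_{p : σ_OPT(p) not expensive} d(p, t(σ_OPT(p)))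
  ≤ 2·Σ_{p : σ_OPT(p) not expensive} d(p, OPT) + 68·ε·opt`. -/
theorem nonexpensive_clients_two_approx {X : Type*} [MetricSpace X] [DecidableEq X]
    (D F : Finset X) (hD3 : 3 ≤ D.card) (hF : F.Nonempty)
    (ε : ℝ) (hε0 : 0 < ε) (hε1 : ε ≤ 1 / 12)
    (k : ℕ) (hk1 : 1 ≤ k) (hkF : k ≤ F.card)
    (OPT S : Finset X) (hOPTF : OPT ⊆ F) (hSF : S ⊆ F)
    (hOPTcard : OPT.card = k) (hScard : S.card = k)
    (σO σS : X → X)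
    (hσO : ∀ p ∈ D, σO p ∈ OPT ∧ dist p (σO p) = dS p OPT)
    (hσS : ∀ p ∈ D, σS p ∈ S ∧ dist p (σS p) = dS p S)
    (hoptpos : 0 < kmCost D OPT)
    (h5 : kmCost D S ≤ 5 * kmCost D OPT)
    (hlocal : ∀ c ∈ S, ∀ c' ∈ F, kmCost D S ≤ kmCost D (insert c' (S.erase c)))
    (t : X → X)
    (htpure : ∀ o ∈ OPT, IsPure D S σS σO ε o →
      t o ∈ S ∧ ((symmDiff (cluster D σS (t o)) (cluster D σO o)).card : ℝ)
        ≤ 3 * ε * min ((cluster D σO o).card : ℝ) ((cluster D σS (t o)).card : ℝ))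
    (htnonpure : ∀ o ∈ OPT, ¬ IsPure D S σS σO ε o →
      t o ∈ S ∧ dist o (t o) = dS o S)
    (hcount : ((OPT.filter (fun o => ¬ IsPure D S σS σO ε o)).card : ℝ)
      ≤ Real.log D.card / ε ^ 3)
    -- `a o` is an ε-quantile radius for each nonempty non-pure cluster:
    (a : X → ℝ)
    (hquant : ∀ o ∈ OPT, ¬ IsPure D S σS σO ε o → (cluster D σO o).Nonempty →
      0 ≤ a o ∧
      ε * ((cluster D σO o).card : ℝ)
        ≤ (((cluster D σO o).filter (fun p => dist p o ≤ a o)).card : ℝ) ∧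
      (1 - ε) * ((cluster D σO o).card : ℝ)
        ≤ (((cluster D σO o).filter (fun p => a o ≤ dist p o)).card : ℝ))
    (V : Finset X) (hVsub : V ⊆ OPT)
    (hVnp : ∀ o ∈ V, ¬ IsPure D S σS σO ε o ∧
      ¬ BasicCheap D S σO a (kmCost D OPT) ε o)
    (hVcost : ∑ o ∈ V, ∑ p ∈ cluster D σO o, dS p S ≤ ε ^ 2 * kmCost D OPT) :
    ∑ p ∈ D.filter (fun p => ¬ (¬ IsPure D S σS σO ε (σO p) ∧
        ¬ BasicCheap D S σO a (kmCost D OPT) ε (σO p) ∧ σO p ∉ V)),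
      dist p (t (σO p))
    ≤ 2 * (∑ p ∈ D.filter (fun p => ¬ (¬ IsPure D S σS σO ε (σO p) ∧
        ¬ BasicCheap D S σO a (kmCost D OPT) ε (σO p) ∧ σO p ∉ V)),
        dS p OPT)
      + 68 * ε * kmCost D OPT := by
  classical
  set opt := kmCost D OPT with hopt
  set P : X → Prop := fun o => ¬ (¬ IsPure D S σS σO ε o ∧
      ¬ BasicCheap D S σO a opt ε o ∧ o ∉ V) with hP
  have hL : 0 < Real.log D.card := by
    apply Real.log_pos
    exact_mod_cast lt_of_lt_of_le (by norm_num) hD3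
  -- error term per cluster
  set err : X → ℝ := fun o =>
    8 * ε * (∑ p ∈ cluster D σO o, (dist p o + dS p S))
    + (if o ∈ V then ∑ p ∈ cluster D σO o, dS p S else 0)
    + (if IsPure D S σS σO ε o then 0 else ε ^ 4 * opt / Real.log D.card) with herrdef
  have hWnn : ∀ o : X, 0 ≤ ∑ p ∈ cluster D σO o, (dist p o + dS p S) := by
    intro o
    exact Finset.sum_nonneg fun p _ => add_nonneg dist_nonneg (dS_nonneg' p S)
  have hdSnn : ∀ o : X, 0 ≤ ∑ p ∈ cluster D σO o, dS p S := by
    intro o; exact Finset.sum_nonneg fun p _ => dS_nonneg' p S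
  have herrnn : ∀ o : X, 0 ≤ err o := by
    intro o
    refine add_nonneg (add_nonneg ?_ ?_) ?_
    · exact mul_nonneg (by linarith) (hWnn o)
    · split
      · exact hdSnn o
      · exact le_refl _
    · split
      · exact le_refl _
      · positivity
  -- partition of a sum over all of D into clusters
  have hpartAll : ∀ g : X → ℝ,
      ∑ o ∈ OPT, ∑ p ∈ cluster D σO o, g p = ∑ p ∈ D, g p := by
    intro g
    exact Finset.sum_fiberwise_of_maps_to (fun p hp => (hσO p hp).1) g
  -- partition of the filtered sum into clusters
  have hpart : ∀ g : X → ℝ,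
      ∑ p ∈ D.filter (fun p => P (σO p)), g p
        = ∑ o ∈ OPT.filter P, ∑ p ∈ cluster D σO o, g p := by
    intro g
    rw [← Finset.sum_fiberwise_of_maps_to
      (t := OPT.filter P) (g := σO)
      (fun p hp => by
        rcases Finset.mem_filter.mp hp with ⟨hpD, hPp⟩
        exact Finset.mem_filter.mpr ⟨(hσO p hpD).1, hPp⟩) g]
    refine Finset.sum_congr rfl fun o ho => ?_
    rcases Finset.mem_filter.mp ho with ⟨hoO, hPo⟩
    refine Finset.sum_congr ?_ fun _ _ => rfl
    ext p
    simp only [Finset.mem_filter, cluster]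
    constructor
    · rintro ⟨⟨hpD, hPp⟩, hpo⟩; exact ⟨hpD, hpo⟩
    · rintro ⟨hpD, hpo⟩; exact ⟨⟨hpD, hpo ▸ hPo⟩, hpo⟩
  -- basic facts inside clusters
  have hclusterD : ∀ {o p : X}, p ∈ cluster D σO o → p ∈ D ∧ σO p = o := by
    intro o p hp; exact Finset.mem_filter.mp hp
  have hdSS : ∀ p ∈ D, dist p (σS p) = dS p S := fun p hp => (hσS p hp).2
  -- d(o,S) ≤ d(o,q) + d(q,S) for q ∈ D
  have htri : ∀ o : X, ∀ q ∈ D, dS o S ≤ dist q o + dS q S := by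
    intro o q hq
    calc dS o S ≤ dist o (σS q) := dS_le' (hσS q hq).1
    _ ≤ dist o q + dist q (σS q) := dist_triangle o q (σS q)
    _ = dist q o + dS q S := by rw [dist_comm, hdSS q hq]
  -- ***** per-cluster key bound *****
  have hkey : ∀ o ∈ OPT, P o →
      ∑ p ∈ cluster D σO o, dist p (t o)
        ≤ 2 * ∑ p ∈ cluster D σO o, dist p o + err o := by
    intro o ho hPo
    set Co := cluster D σO o with hCodef
    set Sd := ∑ p ∈ Co, dist p o with hSddef
    have hSdnn : 0 ≤ Sd := Finset.sum_nonneg fun p _ => dist_nonneg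
    set W := ∑ p ∈ Co, (dist p o + dS p S) with hWdef
    have hSdW : Sd ≤ W := by
      rw [hSddef, hWdef]
      exact Finset.sum_le_sum fun p _ => by
        have := dS_nonneg' p S; linarith
    by_cases hV : o ∈ V
    · -- case: o ∈ V, use t(o) = nearest center
      have hnp := (hVnp o hV).1
      obtain ⟨htS, hto⟩ := htnonpure o ho hnp
      have hpt : ∀ p ∈ Co, dist p (t o) ≤ 2 * dist p o + dS p S := by
        intro p hp
        obtain ⟨hpD, -⟩ := hclusterD hp
        have h1 : dist p (t o) ≤ dist p o + dist o (t o) := dist_triangle p o (t o)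
        have h2 : dist o (t o) = dS o S := hto
        have h3 := htri o p hpD
        linarith
      calc ∑ p ∈ Co, dist p (t o) ≤ ∑ p ∈ Co, (2 * dist p o + dS p S) :=
            Finset.sum_le_sum hpt
        _ = 2 * Sd + ∑ p ∈ Co, dS p S := by
            rw [Finset.sum_add_distrib, ← Finset.mul_sum, hSddef]
        _ ≤ 2 * Sd + err o := by
            have h1 : 0 ≤ 8 * ε * W := mul_nonneg (by linarith) (hWnn o)
            have h2 : (if IsPure D S σS σO ε o then 0
                else ε ^ 4 * opt / Real.log D.card) ≥ 0 := by
              split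
              · exact le_refl _
              · positivity
            simp only [herrdef, if_pos hV, if_neg hnp]
            have h3 : 0 ≤ ε ^ 4 * opt / Real.log D.card := by positivity
            rw [← hWdef]
            linarith
    · by_cases hpure : IsPure D S σS σO ε o
      · -- pure case: local search argument
        obtain ⟨htS, hpure3⟩ := htpure o ho hpure
        rcases Finset.eq_empty_or_nonempty Co with hCoe | hCo
        · rw [hCoe]
          simp only [Finset.sum_empty]
          linarith [herrnn o, hSdnn]
        set T := cluster D σS (t o) with hTdef
        set m : ℝ := (Co.card : ℝ) with hmdef
        have hm : 0 < m := by rw [hmdef]; exact_mod_cast Finset.card_pos.mpr hCo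
        have hTD : T ⊆ D := Finset.filter_subset _ _
        have hCoD : Co ⊆ D := Finset.filter_subset _ _
        -- symmetric-difference bounds
        have hsdm : ((symmDiff T Co).card : ℝ) ≤ 3 * ε * m := by
          refine le_trans hpure3 ?_
          have hmin : m ⊓ ((T.card : ℝ)) ≤ m := min_le_left _ _
          have h3e : (0:ℝ) ≤ 3 * ε := by linarith
          exact mul_le_mul_of_nonneg_left hmin h3e
        have hsdu : symmDiff T Co = (T \ Co) ∪ (Co \ T) := symmDiff_def T Co
        have hCoT : ((Co \ T).card : ℝ) ≤ 3 * ε * m := by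
          refine le_trans ?_ hsdm
          have : Co \ T ⊆ symmDiff T Co := by
            rw [hsdu]; exact Finset.subset_union_right
          exact_mod_cast Finset.card_le_card this
        have hTCo : ((T \ Co).card : ℝ) ≤ 3 * ε * m := by
          refine le_trans ?_ hsdm
          have : T \ Co ⊆ symmDiff T Co := by
            rw [hsdu]; exact Finset.subset_union_left
          exact_mod_cast Finset.card_le_card this
        -- the intersection is large
        have hIcard : (1 - 3 * ε) * m ≤ ((Co ∩ T).card : ℝ) := by
          have := Finset.card_sdiff_add_card_inter Co T
          have hcast : ((Co \ T).card : ℝ) + ((Co ∩ T).card : ℝ) = m := by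
            rw [hmdef]; exact_mod_cast this
          linarith
        -- distance from o to t o
        have hq : ∀ q ∈ Co ∩ T, dist o (t o) ≤ dist q o + dS q S := by
          intro q hqI
          obtain ⟨hqCo, hqT⟩ := Finset.mem_inter.mp hqI
          obtain ⟨hqD, hqs⟩ := Finset.mem_filter.mp hqT
          calc dist o (t o) ≤ dist o q + dist q (t o) := dist_triangle _ _ _
            _ = dist q o + dS q S := by
                rw [dist_comm o q, ← hqs, hdSS q hqD]
        have hIW : (((Co ∩ T).card : ℝ)) * dist o (t o) ≤ W := by
          have h1 : ∑ q ∈ Co ∩ T, dist o (t o) ≤ ∑ q ∈ Co ∩ T, (dist q o + dS q S) :=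
            Finset.sum_le_sum hq
          rw [Finset.sum_const, nsmul_eq_mul] at h1
          refine h1.trans ?_
          rw [hWdef]
          exact Finset.sum_le_sum_of_subset_of_nonneg Finset.inter_subset_left
            (fun p _ _ => add_nonneg dist_nonneg (dS_nonneg' _ _))
        have hdnn : (0:ℝ) ≤ dist o (t o) := dist_nonneg
        have hmW : m * dist o (t o) ≤ (4 / 3) * W := by
          nlinarith [hIW, hIcard, mul_nonneg hm.le hdnn, hWnn o,
            mul_le_mul_of_nonneg_right hIcard hdnn]
        -- local optimality for the swap (t o, o)
        have hswap := hlocal (t o) htS o (hOPTF ho)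
        have hup : kmCost D (insert o (S.erase (t o)))
            ≤ ∑ p ∈ D, (if p ∈ Co then dist p o
                else if p ∈ T then dS p S + dist o (t o) else dS p S) := by
          unfold kmCost
          refine Finset.sum_le_sum fun p hp => ?_
          have hoS' : o ∈ insert o (S.erase (t o)) := Finset.mem_insert_self _ _
          by_cases h1 : p ∈ Co
          · rw [if_pos h1]; exact dS_le' hoS'
          · rw [if_neg h1]
            by_cases h2 : p ∈ T
            · rw [if_pos h2]
              obtain ⟨hpD, hps⟩ := Finset.mem_filter.mp h2
              calc dS p (insert o (S.erase (t o))) ≤ dist p o := dS_le' hoS'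
                _ ≤ dist p (t o) + dist (t o) o := dist_triangle _ _ _
                _ = dS p S + dist o (t o) := by
                    rw [dist_comm (t o) o, ← hps, hdSS p hpD]
            · rw [if_neg h2]
              have hsne : σS p ∈ insert o (S.erase (t o)) := by
                refine Finset.mem_insert_of_mem (Finset.mem_erase.mpr ⟨?_, (hσS p hp).1⟩)
                intro hcon
                exact h2 (Finset.mem_filter.mpr ⟨hp, hcon⟩)
              calc dS p (insert o (S.erase (t o))) ≤ dist p (σS p) := dS_le' hsne
                _ = dS p S := hdSS p hp
        -- evaluate the right-hand side
        have hgsum : ∑ p ∈ D, (if p ∈ Co then dist p o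
              else if p ∈ T then dS p S + dist o (t o) else dS p S)
            = (∑ p ∈ D \ Co, dS p S) + ((T \ Co).card : ℝ) * dist o (t o) + Sd := by
          rw [← Finset.sum_sdiff hCoD]
          have hA : ∑ p ∈ Co, (if p ∈ Co then dist p o
              else if p ∈ T then dS p S + dist o (t o) else dS p S) = Sd := by
            rw [hSddef]
            exact Finset.sum_congr rfl fun p hp => if_pos hp
          have hB : ∑ p ∈ D \ Co, (if p ∈ Co then dist p o
              else if p ∈ T then dS p S + dist o (t o) else dS p S)
              = (∑ p ∈ D \ Co, dS p S) + ((T \ Co).card : ℝ) * dist o (t o) := by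
            have hB1 : ∀ p ∈ D \ Co, (if p ∈ Co then dist p o
                else if p ∈ T then dS p S + dist o (t o) else dS p S)
                = dS p S + (if p ∈ T then dist o (t o) else 0) := by
              intro p hp
              rw [if_neg (Finset.mem_sdiff.mp hp).2]
              by_cases h2 : p ∈ T
              · rw [if_pos h2, if_pos h2]
              · rw [if_neg h2, if_neg h2, add_zero]
            rw [Finset.sum_congr rfl hB1, Finset.sum_add_distrib, ← Finset.sum_filter]
            have hff : (D \ Co).filter (fun p => p ∈ T) = T \ Co := by
              ext p
              simp only [Finset.mem_filter, Finset.mem_sdiff]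
              constructor
              · rintro ⟨⟨hpD, hpCo⟩, hpT⟩; exact ⟨hpT, hpCo⟩
              · rintro ⟨hpT, hpCo⟩; exact ⟨⟨hTD hpT, hpCo⟩, hpT⟩
            rw [hff, Finset.sum_const, nsmul_eq_mul]
          rw [hA, hB]
        -- conclude cost on Co in S is small
        have hCoS : ∑ p ∈ Co, dS p S ≤ Sd + 4 * ε * W := by
          have hcostsplit : kmCost D S = (∑ p ∈ D \ Co, dS p S) + ∑ p ∈ Co, dS p S := by
            unfold kmCost
            rw [← Finset.sum_sdiff hCoD]
          have hchain : kmCost D S ≤ (∑ p ∈ D \ Co, dS p S)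
              + ((T \ Co).card : ℝ) * dist o (t o) + Sd :=
            le_trans hswap (le_trans hup (le_of_eq hgsum))
          have hTCoW : ((T \ Co).card : ℝ) * dist o (t o) ≤ 4 * ε * W := by
            have h1 : ((T \ Co).card : ℝ) * dist o (t o) ≤ 3 * ε * m * dist o (t o) :=
              mul_le_mul_of_nonneg_right hTCo hdnn
            nlinarith [hmW, hε0.le]
          linarith
        -- final assembly for the pure case
        have hfin : ∑ p ∈ Co, dist p (t o)
            ≤ ∑ p ∈ Co, (if p ∈ T then dS p S else dist p o + dist o (t o)) := by
          refine Finset.sum_le_sum fun p hp => ?_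
          by_cases h2 : p ∈ T
          · rw [if_pos h2]
            obtain ⟨hpD, hps⟩ := Finset.mem_filter.mp h2
            rw [← hps, hdSS p hpD]
          · rw [if_neg h2]
            exact dist_triangle p o (t o)
        have hsplit2 : ∑ p ∈ Co, (if p ∈ T then dS p S else dist p o + dist o (t o))
            = (∑ p ∈ Co.filter (fun p => p ∈ T), dS p S)
              + ((∑ p ∈ Co.filter (fun p => p ∉ T), dist p o)
                + ((Co.filter (fun p => p ∉ T)).card : ℝ) * dist o (t o)) := by
          rw [Finset.sum_ite, Finset.sum_add_distrib, Finset.sum_const, nsmul_eq_mul]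
        have hIle : ∑ p ∈ Co.filter (fun p => p ∈ T), dS p S ≤ Sd + 4 * ε * W := by
          refine le_trans ?_ hCoS
          exact Finset.sum_le_sum_of_subset_of_nonneg (Finset.filter_subset _ _)
            (fun p _ _ => dS_nonneg' p S)
        have hOle : (∑ p ∈ Co.filter (fun p => p ∉ T), dist p o)
            + ((Co.filter (fun p => p ∉ T)).card : ℝ) * dist o (t o)
            ≤ Sd + 4 * ε * W := by
          have h1 : ∑ p ∈ Co.filter (fun p => p ∉ T), dist p o ≤ Sd := by
            rw [hSddef]
            exact Finset.sum_le_sum_of_subset_of_nonneg (Finset.filter_subset _ _)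
              (fun p _ _ => dist_nonneg)
          have h2 : Co.filter (fun p => p ∉ T) = Co \ T := (Finset.sdiff_eq_filter Co T).symm
          have h3 : ((Co.filter (fun p => p ∉ T)).card : ℝ) * dist o (t o)
              ≤ 3 * ε * m * dist o (t o) := by
            rw [h2]
            exact mul_le_mul_of_nonneg_right hCoT hdnn
          have h4 : 3 * ε * m * dist o (t o) ≤ 4 * ε * W := by
            nlinarith [hmW, hε0.le]
          linarith
        have herro : err o = 8 * ε * W := by
          simp only [herrdef, if_neg hV, if_pos hpure, ← hCodef, ← hWdef]
          ring
        rw [herro]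
        have h9 : (∑ p ∈ Co, (if p ∈ T then dS p S else dist p o + dist o (t o)))
            ≤ 2 * Sd + 8 * ε * W := by
          rw [hsplit2]
          linarith
        linarith [hfin, h9]
      · -- basic-cheap case
        have hbc : BasicCheap D S σO a opt ε o := by
          by_contra hnbc
          exact hPo ⟨hpure, hnbc, hV⟩
        obtain ⟨htS, hto⟩ := htnonpure o ho hpure
        rcases Finset.eq_empty_or_nonempty Co with hCoe | hCo
        · rw [hCoe]
          simp only [Finset.sum_empty]
          linarith [herrnn o, hSdnn]
        obtain ⟨ha0, hlow, hup⟩ := hquant o ho hpure hCo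
        rw [← hCodef] at hlow hup
        set m : ℝ := (Co.card : ℝ) with hmdef
        have hm : 0 < m := by rw [hmdef]; exact_mod_cast Finset.card_pos.mpr hCo
        -- (1-ε)·m·a ≤ Sd
        have hma : (1 - ε) * (m * a o) ≤ Sd := by
          have h1 : ((Co.filter (fun p => a o ≤ dist p o)).card : ℝ) * a o
              ≤ ∑ p ∈ Co.filter (fun p => a o ≤ dist p o), dist p o := by
            have := Finset.card_nsmul_le_sum (Co.filter (fun p => a o ≤ dist p o))
              (fun p => dist p o) (a o) (fun x hx => (Finset.mem_filter.mp hx).2)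
            rwa [nsmul_eq_mul] at this
          have h2 : ∑ p ∈ Co.filter (fun p => a o ≤ dist p o), dist p o ≤ Sd :=
            Finset.sum_le_sum_of_subset_of_nonneg (Finset.filter_subset _ _)
              (fun p _ _ => dist_nonneg)
          have h3 : (1 - ε) * m * a o
              ≤ ((Co.filter (fun p => a o ≤ dist p o)).card : ℝ) * a o :=
            mul_le_mul_of_nonneg_right hup ha0
          calc (1 - ε) * (m * a o) = (1 - ε) * m * a o := by ring
            _ ≤ _ := h3
            _ ≤ _ := h1
            _ ≤ Sd := h2
        -- pointwise triangle bound
        have hsum1 : ∑ p ∈ Co, dist p (t o) ≤ Sd + m * dS o S := by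
          calc ∑ p ∈ Co, dist p (t o) ≤ ∑ p ∈ Co, (dist p o + dS o S) := by
                refine Finset.sum_le_sum fun p hp => ?_
                calc dist p (t o) ≤ dist p o + dist o (t o) := dist_triangle p o (t o)
                  _ = dist p o + dS o S := by rw [hto]
            _ = Sd + m * dS o S := by
                rw [Finset.sum_add_distrib, Finset.sum_const, nsmul_eq_mul, hSddef]
        have herro : err o = 8 * ε * W + ε ^ 4 * opt / Real.log D.card := by
          simp only [herrdef, if_neg hV, if_neg hpure, ← hCodef, ← hWdef]
          ring
        have hc4 : 0 ≤ ε ^ 4 * opt / Real.log D.card := by positivity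
        have hdSo : 0 ≤ dS o S := dS_nonneg' o S
        rcases hbc with h1 | h2
        · -- leaders are cheap
          unfold BasicCheap at h1
          rw [← hCodef] at h1
          set Lc := Co.filter (fun p => dist p o ≤ a o) with hLcdef
          have hLcard : ε * m ≤ (Lc.card : ℝ) := hlow
          have hLpos : 0 < (Lc.card : ℝ) := lt_of_lt_of_le (by positivity) hLcard
          have hLSnn : 0 ≤ ∑ p ∈ Lc, dS p S :=
            Finset.sum_nonneg fun p _ => dS_nonneg' p S
          have hdo : (Lc.card : ℝ) * dS o S
              ≤ (Lc.card : ℝ) * a o + ∑ p ∈ Lc, dS p S := by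
            have h3 : ∑ q ∈ Lc, dS o S ≤ ∑ q ∈ Lc, (a o + dS q S) := by
              refine Finset.sum_le_sum fun q hq => ?_
              obtain ⟨hqCo, hqa⟩ := Finset.mem_filter.mp hq
              have hqD : q ∈ D := (hclusterD hqCo).1
              have := htri o q hqD
              linarith
            rw [Finset.sum_const, nsmul_eq_mul, Finset.sum_add_distrib,
              Finset.sum_const, nsmul_eq_mul] at h3
            exact h3
          -- m·dS o S ≤ m·a o + ε⁴opt/log
          have k1 : (Lc.card : ℝ) * (m * dS o S)
              ≤ (Lc.card : ℝ) * (m * a o) + m * ∑ p ∈ Lc, dS p S := by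
            nlinarith [mul_le_mul_of_nonneg_left hdo hm.le]
          have k2 : m * ∑ p ∈ Lc, dS p S
              ≤ (Lc.card : ℝ) * (ε ^ 4 * opt / Real.log D.card) := by
            have k21 : m * ∑ p ∈ Lc, dS p S ≤ m * (ε ^ 5 * opt / Real.log D.card) :=
              mul_le_mul_of_nonneg_left h1 hm.le
            have k22 : m * (ε ^ 5 * opt / Real.log D.card)
                = (ε * m) * (ε ^ 4 * opt / Real.log D.card) := by ring
            have k23 : (ε * m) * (ε ^ 4 * opt / Real.log D.card)
                ≤ (Lc.card : ℝ) * (ε ^ 4 * opt / Real.log D.card) :=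
              mul_le_mul_of_nonneg_right hLcard hc4
            rw [k22] at k21
            linarith
          have k4 : m * dS o S ≤ m * a o + ε ^ 4 * opt / Real.log D.card := by
            have k3 : (Lc.card : ℝ) * (m * dS o S)
                ≤ (Lc.card : ℝ) * (m * a o + ε ^ 4 * opt / Real.log D.card) := by
              have : (Lc.card : ℝ) * (m * a o + ε ^ 4 * opt / Real.log D.card)
                  = (Lc.card : ℝ) * (m * a o)
                    + (Lc.card : ℝ) * (ε ^ 4 * opt / Real.log D.card) := by ring
              linarith
            exact le_of_mul_le_mul_left k3 hLpos
          have k5 : m * a o ≤ Sd + 8 * ε * W := by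
            nlinarith [hma, hSdW, mul_nonneg (mul_nonneg hm.le ha0) hε0.le,
              mul_nonneg hm.le ha0, hWnn o, hSdnn]
          rw [herro]
          linarith
        · -- center is covered
          unfold BasicCheap at h2
          rw [← hCodef, ← hWdef] at h2
          have hme : m * ((1 + ε) * a o + ε * (1 / m * W))
              = (1 + ε) * (m * a o) + ε * W := by
            field_simp
          have k : m * dS o S ≤ (1 + ε) * (m * a o) + ε * W := by
            have hh := mul_le_mul_of_nonneg_left h2 hm.le
            rw [hme] at hh
            linarith
          have k5 : m * dS o S ≤ Sd + 8 * ε * W := by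
            nlinarith [hma, hSdW, mul_nonneg (mul_nonneg hm.le ha0) hε0.le,
              mul_nonneg hm.le ha0, hWnn o, hSdnn]
          rw [herro]
          linarith
  -- ***** total error bound *****
  have herrsum : ∑ o ∈ OPT.filter P, err o ≤ 50 * ε * opt := by
    have hsub : ∑ o ∈ OPT.filter P, err o ≤ ∑ o ∈ OPT, err o :=
      Finset.sum_le_sum_of_subset_of_nonneg (Finset.filter_subset _ _)
        (fun o _ _ => herrnn o)
    have hsplit : ∑ o ∈ OPT, err o
        = 8 * ε * (∑ o ∈ OPT, ∑ p ∈ cluster D σO o, (dist p o + dS p S))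
          + (∑ o ∈ OPT, (if o ∈ V then ∑ p ∈ cluster D σO o, dS p S else 0))
          + (∑ o ∈ OPT, (if IsPure D S σS σO ε o then 0
              else ε ^ 4 * opt / Real.log D.card)) := by
      simp only [herrdef]
      rw [Finset.sum_add_distrib, Finset.sum_add_distrib, Finset.mul_sum]
    -- term 1
    have hT1 : ∑ o ∈ OPT, ∑ p ∈ cluster D σO o, (dist p o + dS p S)
        ≤ 6 * opt := by
      have he : ∑ o ∈ OPT, ∑ p ∈ cluster D σO o, (dist p o + dS p S)
          = ∑ o ∈ OPT, ∑ p ∈ cluster D σO o, (dist p (σO p) + dS p S) := by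
        refine Finset.sum_congr rfl fun o ho => Finset.sum_congr rfl fun p hp => ?_
        rw [(hclusterD hp).2]
      rw [he, hpartAll (fun p => dist p (σO p) + dS p S), Finset.sum_add_distrib]
      have h1 : ∑ p ∈ D, dist p (σO p) = opt := by
        rw [hopt]; unfold kmCost
        exact Finset.sum_congr rfl fun p hp => (hσO p hp).2
      have h2 : ∑ p ∈ D, dS p S = kmCost D S := rfl
      rw [h1, h2]
      linarith
    -- term 2
    have hT2 : ∑ o ∈ OPT, (if o ∈ V then ∑ p ∈ cluster D σO o, dS p S else 0)
        ≤ ε ^ 2 * opt := by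
      rw [← Finset.sum_filter]
      have hfV : OPT.filter (fun o => o ∈ V) = V := by
        ext o
        simp only [Finset.mem_filter]
        exact ⟨fun h => h.2, fun h => ⟨hVsub h, h⟩⟩
      rw [hfV]
      exact hVcost
    -- term 3
    have hT3 : ∑ o ∈ OPT, (if IsPure D S σS σO ε o then 0
        else ε ^ 4 * opt / Real.log D.card) ≤ ε * opt := by
      have he : ∀ o : X, (if IsPure D S σS σO ε o then (0:ℝ)
          else ε ^ 4 * opt / Real.log D.card)
          = (if ¬ IsPure D S σS σO ε o then ε ^ 4 * opt / Real.log D.card else 0) := by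
        intro o
        by_cases h : IsPure D S σS σO ε o <;> simp [h]
      rw [Finset.sum_congr rfl (fun o _ => he o), ← Finset.sum_filter,
        Finset.sum_const, nsmul_eq_mul]
      calc ((OPT.filter (fun o => ¬ IsPure D S σS σO ε o)).card : ℝ)
            * (ε ^ 4 * opt / Real.log D.card)
          ≤ (Real.log D.card / ε ^ 3) * (ε ^ 4 * opt / Real.log D.card) :=
            mul_le_mul_of_nonneg_right hcount (by positivity)
        _ = ε * opt := by
            field_simp
    have h8 : 8 * ε * (∑ o ∈ OPT, ∑ p ∈ cluster D σO o, (dist p o + dS p S))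
        ≤ 8 * ε * (6 * opt) :=
      mul_le_mul_of_nonneg_left hT1 (by linarith)
    have hee : ε ^ 2 * opt ≤ ε * opt := by nlinarith [mul_pos hε0 hoptpos]
    calc ∑ o ∈ OPT.filter P, err o ≤ ∑ o ∈ OPT, err o := hsub
      _ ≤ 8 * ε * (6 * opt) + ε ^ 2 * opt + ε * opt := by
          rw [hsplit]; linarith
      _ ≤ 50 * ε * opt := by nlinarith [mul_pos hε0 hoptpos]
  -- ***** assembly *****
  have hgoalL : ∑ p ∈ D.filter (fun p => P (σO p)), dist p (t (σO p))
      = ∑ o ∈ OPT.filter P, ∑ p ∈ cluster D σO o, dist p (t o) := by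
    rw [hpart (fun p => dist p (t (σO p)))]
    refine Finset.sum_congr rfl fun o ho => Finset.sum_congr rfl fun p hp => ?_
    rw [(hclusterD hp).2]
  have hgoalR : ∑ p ∈ D.filter (fun p => P (σO p)), dS p OPT
      = ∑ o ∈ OPT.filter P, ∑ p ∈ cluster D σO o, dist p o := by
    rw [hpart (fun p => dS p OPT)]
    refine Finset.sum_congr rfl fun o ho => Finset.sum_congr rfl fun p hp => ?_
    obtain ⟨hpD, hpo⟩ := hclusterD hp
    rw [← (hσO p hpD).2, hpo]
  have hmain : ∑ o ∈ OPT.filter P, ∑ p ∈ cluster D σO o, dist p (t o)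
      ≤ 2 * (∑ o ∈ OPT.filter P, ∑ p ∈ cluster D σO o, dist p o) + 50 * ε * opt := by
    calc ∑ o ∈ OPT.filter P, ∑ p ∈ cluster D σO o, dist p (t o)
        ≤ ∑ o ∈ OPT.filter P, (2 * ∑ p ∈ cluster D σO o, dist p o + err o) := by
          refine Finset.sum_le_sum fun o ho => ?_
          rcases Finset.mem_filter.mp ho with ⟨hoO, hPo⟩
          exact hkey o hoO hPo
      _ = 2 * (∑ o ∈ OPT.filter P, ∑ p ∈ cluster D σO o, dist p o)
            + ∑ o ∈ OPT.filter P, err o := by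
          rw [Finset.sum_add_distrib, Finset.mul_sum]
      _ ≤ _ := by linarith [herrsum]
  show ∑ p ∈ D.filter (fun p => P (σO p)), dist p (t (σO p))
      ≤ 2 * (∑ p ∈ D.filter (fun p => P (σO p)), dS p OPT) + 68 * ε * opt
  rw [hgoalL, hgoalR]
  have : 50 * ε * opt ≤ 68 * ε * opt := by nlinarith
  linarith [hmain]
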